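/- Let α > −1/4 and β = √(1+4α). The function θ₀(R) = R^{(1−β)/2}(1−6R^{2β}+R^{4β})/(β²(1+R^{2β})^{3/2}) satisfies 𝓛θ₀ = 0 on (0,∞), i.e. for all R > 0, −θ₀''(R) + (α/R²)·θ₀(R) − 5·W_α(R)^4·θ₀(R) = 0. -/

import Mathlib

noncomputable def betaOf (α : ℝ) : ℝ := Real.sqrt (1 + 4 * α)

/-- The ground state soliton `W_α(R) = (3β²)^(1/4) (R^(β-1)/(1+R^(2β)))^(1/2)`. -/
noncomputable def Walpha (α : ℝ) (R : ℝ) : ℝ :=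
  (3 * betaOf α ^ 2) ^ ((1 : ℝ) / 4) *
    (R ^ (betaOf α - 1) / (1 + R ^ (2 * betaOf α))) ^ ((1 : ℝ) / 2)

/-- `θ₀(R) = R^((1-β)/2) (1-6R^(2β)+R^(4β)) / (β² (1+R^(2β))^(3/2))`. -/
noncomputable def theta0 (α : ℝ) (R : ℝ) : ℝ :=
  R ^ ((1 - betaOf α) / 2) * (1 - 6 * R ^ (2 * betaOf α) + R ^ (4 * betaOf α)) /
    (betaOf α ^ 2 * (1 + R ^ (2 * betaOf α)) ^ ((3 : ℝ) / 2))

noncomputable def G (b c e R : ℝ) : ℝ := R ^ c * (1 + R ^ b) ^ e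

noncomputable def DG (b c e R : ℝ) : ℝ :=
  c * G b (c - 1) e R + e * b * G b (c + b - 1) (e - 1) R

lemma hasDerivAt_G (b c e R : ℝ) (hR : 0 < R) :
    HasDerivAt (G b c e) (DG b c e R) R := by
  have hv : (0:ℝ) < 1 + R ^ b := by positivity
  have h1 : HasDerivAt (fun x : ℝ => x ^ c) (c * R ^ (c - 1)) R :=
    Real.hasDerivAt_rpow_const (Or.inl hR.ne')
  have h2 : HasDerivAt (fun x : ℝ => x ^ b) (b * R ^ (b - 1)) R :=
    Real.hasDerivAt_rpow_const (Or.inl hR.ne')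
  have h3 : HasDerivAt (fun x : ℝ => 1 + x ^ b) (b * R ^ (b - 1)) R := h2.const_add 1
  have h4 : HasDerivAt (fun x : ℝ => (1 + x ^ b) ^ e)
      (b * R ^ (b - 1) * e * (1 + R ^ b) ^ (e - 1)) R :=
    h3.rpow_const (Or.inl hv.ne')
  have h5 := h1.mul h4
  refine HasDerivAt.congr_deriv h5 ?_
  unfold DG G
  rw [show c + b - 1 = c + (b - 1) by ring, Real.rpow_add hR]
  ring

lemma hasDerivAt_DG (b c e R : ℝ) (hR : 0 < R) :
    HasDerivAt (fun S => DG b c e S)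
      (c * DG b (c - 1) e R + e * b * DG b (c + b - 1) (e - 1) R) R :=
  ((hasDerivAt_G b (c - 1) e R hR).const_mul c).add
    ((hasDerivAt_G b (c + b - 1) (e - 1) R hR).const_mul (e * b))

set_option maxHeartbeats 2000000 in
/-- `θ₀` lies in the kernel of the linearized operator `𝓛 = -∂_R² + α/R² - 5W_α⁴`. -/
theorem theta0_solves_linearized (α : ℝ) (hα : -(1 / 4 : ℝ) < α) :
    ∀ R : ℝ, 0 < R →
      -(deriv (deriv (theta0 α)) R) + (α / R ^ 2) * theta0 α R
        - 5 * (Walpha α R) ^ 4 * theta0 α R = 0 := by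
  intro R hR
  have hβ1 : (0:ℝ) < 1 + 4 * α := by linarith
  set β := betaOf α with hβ
  have hβpos : 0 < β := Real.sqrt_pos.mpr hβ1
  have hβ2 : β ^ 2 = 1 + 4 * α := Real.sq_sqrt hβ1.le
  set a := (1 - β) / 2 with ha
  set b := 2 * β with hb
  -- the nice closed form of θ₀ on (0,∞)
  have h0 : ∀ S : ℝ, 0 < S → theta0 α S =
      β⁻¹ ^ 2 * (G b a (-3/2) S - 6 * G b (a + b) (-3/2) S + G b (a + 2*b) (-3/2) S) := by
    intro S hS
    have hv : (0:ℝ) < 1 + S ^ b := by positivity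
    have hv32 : (1 + S ^ b) ^ ((3:ℝ)/2) ≠ 0 := by positivity
    unfold theta0 G
    rw [← hβ, ← ha, ← hb, show 4 * β = 2 * b by rw [hb]; ring,
      show (-3/2 : ℝ) = -(3/2) by norm_num, Real.rpow_neg hv.le,
      Real.rpow_add hS a b, Real.rpow_add hS a (2*b)]
    field_simp
  -- first derivative
  set F1 : ℝ → ℝ := fun S =>
    β⁻¹ ^ 2 * (DG b a (-3/2) S - 6 * DG b (a + b) (-3/2) S + DG b (a + 2*b) (-3/2) S)
    with hF1
  have h1 : ∀ S : ℝ, 0 < S → HasDerivAt (theta0 α) (F1 S) S := by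
    intro S hS
    have hg : HasDerivAt (fun T : ℝ =>
        β⁻¹ ^ 2 * (G b a (-3/2) T - 6 * G b (a + b) (-3/2) T + G b (a + 2*b) (-3/2) T))
        (F1 S) S :=
      (((hasDerivAt_G b a (-3/2) S hS).sub
        ((hasDerivAt_G b (a + b) (-3/2) S hS).const_mul 6)).add
        (hasDerivAt_G b (a + 2*b) (-3/2) S hS)).const_mul (β⁻¹ ^ 2)
    exact hg.congr_of_eventuallyEq
      (Filter.eventuallyEq_of_mem (isOpen_Ioi.mem_nhds hS) fun T hT => h0 T hT)
  have hd2 : deriv (deriv (theta0 α)) R = deriv F1 R :=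
    Filter.EventuallyEq.deriv_eq
      (Filter.eventuallyEq_of_mem (isOpen_Ioi.mem_nhds hR)
        (fun S hS => (h1 S hS).deriv))
  have h3 : HasDerivAt F1
      (β⁻¹ ^ 2 *
        ((a * DG b (a - 1) (-3/2) R + (-3/2) * b * DG b (a + b - 1) (-3/2 - 1) R)
          - 6 * ((a + b) * DG b (a + b - 1) (-3/2) R
              + (-3/2) * b * DG b (a + b + b - 1) (-3/2 - 1) R)
          + ((a + 2*b) * DG b (a + 2*b - 1) (-3/2) R
              + (-3/2) * b * DG b (a + 2*b + b - 1) (-3/2 - 1) R))) R :=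
    (((hasDerivAt_DG b a (-3/2) R hR).sub
      ((hasDerivAt_DG b (a + b) (-3/2) R hR).const_mul 6)).add
      (hasDerivAt_DG b (a + 2*b) (-3/2) R hR)).const_mul (β⁻¹ ^ 2)
  rw [hd2, h3.deriv, h0 R hR]
  -- W^4
  have hv : (0:ℝ) < 1 + R ^ b := by positivity
  have hW : Walpha α R ^ 4 = 3 * β ^ 2 * ((R ^ b / R ^ 2) / (1 + R ^ b) ^ 2) := by
    have hy : (0:ℝ) ≤ R ^ (β - 1) / (1 + R ^ b) := by positivity
    have e1 : ((3 * β ^ 2) ^ ((1:ℝ)/4)) ^ (4:ℕ) = 3 * β ^ 2 := by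
      rw [← Real.rpow_natCast ((3 * β ^ 2) ^ ((1:ℝ)/4)) 4,
        ← Real.rpow_mul (by positivity : (0:ℝ) ≤ 3 * β ^ 2)]
      norm_num
    have e2 : ((R ^ (β - 1) / (1 + R ^ b)) ^ ((1:ℝ)/2)) ^ (4:ℕ)
        = (R ^ (β - 1) / (1 + R ^ b)) ^ (2:ℕ) := by
      rw [← Real.rpow_natCast ((R ^ (β - 1) / (1 + R ^ b)) ^ ((1:ℝ)/2)) 4,
        ← Real.rpow_mul hy, ← Real.rpow_natCast (R ^ (β - 1) / (1 + R ^ b)) 2]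
      norm_num
    have e3 : (R ^ (β - 1)) ^ (2:ℕ) = R ^ b / R ^ 2 := by
      rw [← Real.rpow_natCast (R ^ (β - 1)) 2, ← Real.rpow_mul hR.le]
      push_cast
      rw [show (β - 1) * 2 = b - 2 by rw [hb]; ring, Real.rpow_sub hR,
        show ((2:ℝ)) = ((2:ℕ):ℝ) by norm_num, Real.rpow_natCast]
    unfold Walpha
    rw [← hβ, ← hb, mul_pow, e1, e2, div_pow, e3]
  rw [hW]
  -- now pure algebra
  simp only [DG, G]
  simp only [Real.rpow_sub hR, Real.rpow_add hR, Real.rpow_one, Real.rpow_sub hv]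
  have hu2 : R ^ (2*b) = (R ^ b) ^ 2 := by
    rw [mul_comm, ← Real.rpow_natCast (R ^ b) 2, ← Real.rpow_mul hR.le]
    norm_num
  rw [hu2]
  rw [show α = (β ^ 2 - 1) / 4 by linarith]
  rw [ha, hb]
  set u := R ^ b with hu
  set p := R ^ a with hp
  set t := (1 + u) ^ (-3/2 : ℝ) with ht
  have hune : (1:ℝ) + u ≠ 0 := by positivity
  field_simp
  ring
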